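/- Let {P_t}_{t∈T} be a Markov semigroup on a Polish space (X, ρ) (T = ℕ₊ or T = [0,∞)) which is Feller, let μ be an ergodic invariant Borel probability measure for {P_t} with Int(supp μ) ≠ ∅, and let x₀ ∈ X. Suppose that for every bounded Lipschitz f : X → ℝ and every ε > 0 there exist an open ball B ⊆ supp μ, N ∈ T and α > 0 such that: (i) |P_t f(x) − P_t f(x₀)| ≤ ε for all x ∈ B and all t ∈ T with t ≥ N; and (ii) for every Borel probability measure ν on X there exists t_ν ∈ T with (P_{t_ν} ν)(B) > α. Then {P_t} satisfies the eventual e-property at x₀. -/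

import Mathlib

open MeasureTheory Filter Topology Metric ENNReal
open scoped Classical

noncomputable section

variable {X : Type*}

/-- A bounded Lipschitz real-valued function. -/
def BddLip [PseudoMetricSpace X] (f : X → ℝ) : Prop :=
  (∃ K, LipschitzWith K f) ∧ ∃ C, ∀ x, |f x| ≤ C

/-- The topological support of a Borel measure:
`{x : μ(B(x,ε)) > 0 for every ε > 0}`. -/
def msupp [PseudoMetricSpace X] [MeasurableSpace X] (μ : Measure X) : Set X :=
  {x | ∀ ε > 0, 0 < μ (Metric.ball x ε)}

/-! ### Discrete time `T = ℕ₊` -/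

/-- Action of a transition kernel family on bounded Borel functions:
`P_n f (x) = ∫ f(y) P_n(x,dy)`. -/
def PfN [MeasurableSpace X] (P : ℕ → X → Measure X) (n : ℕ) (f : X → ℝ) (x : X) : ℝ :=
  ∫ y, f y ∂ P n x

/-- A Markov semigroup indexed by `T = ℕ₊ = {1,2,...}`. -/
def IsMarkovSemigroupN [MeasurableSpace X] (P : ℕ → X → Measure X) : Prop :=
  (∀ n x, 1 ≤ n → IsProbabilityMeasure (P n x)) ∧
  (∀ (n : ℕ) (A : Set X), 1 ≤ n → MeasurableSet A → Measurable fun x => P n x A) ∧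
  ∀ (m n : ℕ) (x : X) (A : Set X), 1 ≤ m → 1 ≤ n → MeasurableSet A →
    P (m + n) x A = ∫⁻ y, P n y A ∂ P m x

/-- The Feller property: each `P_n` maps bounded continuous functions to
bounded continuous functions. -/
def FellerN [MeasurableSpace X] [PseudoMetricSpace X] (P : ℕ → X → Measure X) : Prop :=
  ∀ n, 1 ≤ n → ∀ f : X → ℝ, Continuous f → (∃ C, ∀ x, |f x| ≤ C) →
    Continuous (fun x => PfN P n f x) ∧ ∃ C, ∀ x, |PfN P n f x| ≤ C

/-- The e-property at a point `z`. -/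
def EPropN [MeasurableSpace X] [PseudoMetricSpace X] (P : ℕ → X → Measure X) (z : X) : Prop :=
  ∀ f : X → ℝ, BddLip f → ∀ ε > 0, ∃ δ > 0, ∀ x, dist x z < δ → ∀ n, 1 ≤ n →
    |PfN P n f x - PfN P n f z| < ε

/-- The eventual e-property at a point `z`. -/
def EventualEPropN [MeasurableSpace X] [PseudoMetricSpace X] (P : ℕ → X → Measure X)
    (z : X) : Prop :=
  ∀ f : X → ℝ, BddLip f → ∀ ε > 0, ∃ δ > 0, ∃ n₀ : ℕ, 1 ≤ n₀ ∧
    ∀ x, dist x z < δ → ∀ n, n₀ ≤ n → |PfN P n f x - PfN P n f z| < ε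

/-- Eventual continuity (asymptotic equicontinuity) at a point `z`. -/
def EvContN [MeasurableSpace X] [PseudoMetricSpace X] (P : ℕ → X → Measure X) (z : X) : Prop :=
  ∀ f : X → ℝ, BddLip f → ∀ ε > 0, ∃ δ > 0, ∀ x, dist x z < δ →
    Filter.limsup (fun n => |PfN P n f x - PfN P n f z|) Filter.atTop ≤ ε

/-- Invariance of a measure: `P_n μ = μ` for all `n ∈ ℕ₊`. -/
def InvariantN [MeasurableSpace X] (P : ℕ → X → Measure X) (μ : Measure X) : Prop :=
  ∀ n, 1 ≤ n → μ.bind (P n) = μ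

/-- `μ` is an ergodic invariant measure: it is invariant and every Borel set `A`
with `P_n 1_A = 1_A` μ-a.e. for all `n` has `μ(A) ∈ {0,1}`. -/
def ErgodicMeasN [MeasurableSpace X] (P : ℕ → X → Measure X) (μ : Measure X) : Prop :=
  InvariantN P μ ∧
  ∀ A : Set X, MeasurableSet A →
    (∀ n, 1 ≤ n → ∀ᵐ x ∂μ, P n x A = A.indicator (fun _ => (1 : ℝ≥0∞)) x) →
    μ A = 0 ∨ μ A = 1

/-- Cesàro averages acting on functions: `Q_n f(x) = (1/n) ∑_{k=1}^n P_k f(x)`. -/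
def QfN [MeasurableSpace X] (P : ℕ → X → Measure X) (n : ℕ) (f : X → ℝ) (x : X) : ℝ :=
  (1 / (n : ℝ)) * ∑ k ∈ Finset.Icc 1 n, PfN P k f x

/-- Cesàro averages on sets: `Q_n(x,A) = (1/n) ∑_{k=1}^n P_k(x,A)`. -/
def QsetN [MeasurableSpace X] (P : ℕ → X → Measure X) (n : ℕ) (x : X) (A : Set X) : ℝ≥0∞ :=
  (n : ℝ≥0∞)⁻¹ * ∑ k ∈ Finset.Icc 1 n, P k x A

/-- Asymptotic stability with unique invariant measure `μs`. -/
def AsympStableN [MeasurableSpace X] [PseudoMetricSpace X] (P : ℕ → X → Measure X)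
    (μs : Measure X) : Prop :=
  IsProbabilityMeasure μs ∧ InvariantN P μs ∧
  (∀ ν : Measure X, IsProbabilityMeasure ν → InvariantN P ν → ν = μs) ∧
  ∀ ν : Measure X, IsProbabilityMeasure ν → ∀ f : X → ℝ, Continuous f →
    (∃ C, ∀ x, |f x| ≤ C) →
    Tendsto (fun n => ∫ y, f y ∂ (ν.bind (P n))) atTop (𝓝 (∫ y, f y ∂ μs))

/-! ### Continuous time `T = [0,∞)` -/

/-- Action on bounded Borel functions, continuous time. -/
def PfR [MeasurableSpace X] (P : ℝ → X → Measure X) (t : ℝ) (f : X → ℝ) (x : X) : ℝ :=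
  ∫ y, f y ∂ P t x

/-- A Markov semigroup indexed by `T = [0,∞)`, with `P_0(x,·) = δ_x`. -/
def IsMarkovSemigroupR [MeasurableSpace X] (P : ℝ → X → Measure X) : Prop :=
  (∀ t x, 0 ≤ t → IsProbabilityMeasure (P t x)) ∧
  (∀ (t : ℝ) (A : Set X), 0 ≤ t → MeasurableSet A → Measurable fun x => P t x A) ∧
  (∀ x, P 0 x = Measure.dirac x) ∧
  ∀ (s t : ℝ) (x : X) (A : Set X), 0 ≤ s → 0 ≤ t → MeasurableSet A →
    P (s + t) x A = ∫⁻ y, P t y A ∂ P s x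

/-- Joint time-measurability: `s ↦ P_s(x,A)` is Borel measurable. -/
def TimeMeasR [MeasurableSpace X] (P : ℝ → X → Measure X) : Prop :=
  ∀ (x : X) (A : Set X), MeasurableSet A → Measurable fun s : ℝ => P s x A

/-- The Feller property, continuous time. -/
def FellerR [MeasurableSpace X] [PseudoMetricSpace X] (P : ℝ → X → Measure X) : Prop :=
  ∀ t : ℝ, 0 ≤ t → ∀ f : X → ℝ, Continuous f → (∃ C, ∀ x, |f x| ≤ C) →
    Continuous (fun x => PfR P t f x) ∧ ∃ C, ∀ x, |PfR P t f x| ≤ C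

/-- Strong continuity on `C_b(X)`: `sup_x |P_t f(x) - f(x)| → 0` as `t ↓ 0`. -/
def StrongContR [MeasurableSpace X] [PseudoMetricSpace X] (P : ℝ → X → Measure X) : Prop :=
  ∀ f : X → ℝ, Continuous f → (∃ C, ∀ x, |f x| ≤ C) →
    ∀ ε > 0, ∃ η > 0, ∀ t : ℝ, 0 < t → t < η → ∀ x, |PfR P t f x - f x| < ε

/-- The e-property at a point `z`, continuous time. -/
def EPropR [MeasurableSpace X] [PseudoMetricSpace X] (P : ℝ → X → Measure X) (z : X) : Prop :=
  ∀ f : X → ℝ, BddLip f → ∀ ε > 0, ∃ δ > 0, ∀ x, dist x z < δ → ∀ t : ℝ, 0 ≤ t →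
    |PfR P t f x - PfR P t f z| < ε

/-- The eventual e-property at a point `z`, continuous time. -/
def EventualEPropR [MeasurableSpace X] [PseudoMetricSpace X] (P : ℝ → X → Measure X)
    (z : X) : Prop :=
  ∀ f : X → ℝ, BddLip f → ∀ ε > 0, ∃ δ > 0, ∃ t₀ : ℝ, 0 ≤ t₀ ∧
    ∀ x, dist x z < δ → ∀ t : ℝ, t₀ ≤ t → |PfR P t f x - PfR P t f z| < ε

/-- Eventual continuity at `z`, continuous time. -/
def EvContR [MeasurableSpace X] [PseudoMetricSpace X] (P : ℝ → X → Measure X) (z : X) : Prop :=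
  ∀ f : X → ℝ, BddLip f → ∀ ε > 0, ∃ δ > 0, ∀ x, dist x z < δ →
    Filter.limsup (fun t : ℝ => |PfR P t f x - PfR P t f z|) Filter.atTop ≤ ε

/-- Invariance, continuous time. -/
def InvariantR [MeasurableSpace X] (P : ℝ → X → Measure X) (μ : Measure X) : Prop :=
  ∀ t : ℝ, 0 ≤ t → μ.bind (P t) = μ

/-- Ergodic invariant measure, continuous time. -/
def ErgodicMeasR [MeasurableSpace X] (P : ℝ → X → Measure X) (μ : Measure X) : Prop :=
  InvariantR P μ ∧
  ∀ A : Set X, MeasurableSet A →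
    (∀ t : ℝ, 0 ≤ t → ∀ᵐ x ∂μ, P t x A = A.indicator (fun _ => (1 : ℝ≥0∞)) x) →
    μ A = 0 ∨ μ A = 1

/-- Cesàro averages acting on functions: `Q_t f(x) = (1/t) ∫_0^t P_s f(x) ds`. -/
def QfR [MeasurableSpace X] (P : ℝ → X → Measure X) (t : ℝ) (f : X → ℝ) (x : X) : ℝ :=
  (1 / t) * ∫ s in Set.Ioc (0 : ℝ) t, PfR P s f x

/-- Cesàro averages on sets: `Q_t(x,A) = (1/t) ∫_0^t P_s(x,A) ds`. -/
def QsetR [MeasurableSpace X] (P : ℝ → X → Measure X) (t : ℝ) (x : X) (A : Set X) : ℝ≥0∞ :=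
  ENNReal.ofReal (1 / t) * ∫⁻ s in Set.Ioc (0 : ℝ) t, P s x A

/-- Asymptotic stability, continuous time. -/
def AsympStableR [MeasurableSpace X] [PseudoMetricSpace X] (P : ℝ → X → Measure X)
    (μs : Measure X) : Prop :=
  IsProbabilityMeasure μs ∧ InvariantR P μs ∧
  (∀ ν : Measure X, IsProbabilityMeasure ν → InvariantR P ν → ν = μs) ∧
  ∀ ν : Measure X, IsProbabilityMeasure ν → ∀ f : X → ℝ, Continuous f →
    (∃ C, ∀ x, |f x| ≤ C) →
    Tendsto (fun t : ℝ => ∫ y, f y ∂ (ν.bind (P t))) atTop (𝓝 (∫ y, f y ∂ μs))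

end
universe u

section EPropHelpers
variable {X : Type*} [MeasurableSpace X]

lemma myIntegrable_of_bdd {m : Measure X} [IsFiniteMeasure m] {g : X → ℝ} (hg : Measurable g)
    {C : ℝ} (hb : ∀ y, |g y| ≤ C) : Integrable g m :=
  (integrable_const C).mono' hg.aestronglyMeasurable
    (ae_of_all _ fun y => by simpa [Real.norm_eq_abs] using hb y)

lemma myIsFiniteMeasure_bind {ρ : Measure X} [IsFiniteMeasure ρ] {κ : X → Measure X}
    (hκ : Measurable κ) (hκp : ∀ y, IsProbabilityMeasure (κ y)) :
    IsFiniteMeasure (ρ.bind κ) := by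
  constructor
  rw [Measure.bind_apply MeasurableSet.univ hκ.aemeasurable]
  calc ∫⁻ a, κ a Set.univ ∂ρ = ∫⁻ _, 1 ∂ρ := by
        congr 1; funext a; exact (hκp a).measure_univ
    _ < ⊤ := by simpa using measure_lt_top ρ Set.univ

lemma myBind_univ {ρ : Measure X} {κ : X → Measure X}
    (hκ : Measurable κ) (hκp : ∀ y, IsProbabilityMeasure (κ y)) :
    (ρ.bind κ) Set.univ = ρ Set.univ := by
  rw [Measure.bind_apply MeasurableSet.univ hκ.aemeasurable]
  calc ∫⁻ a, κ a Set.univ ∂ρ = ∫⁻ _, 1 ∂ρ := by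
        congr 1; funext a; exact (hκp a).measure_univ
    _ = ρ Set.univ := by simp

lemma myIsProbabilityMeasure_bind {ρ : Measure X} [IsProbabilityMeasure ρ] {κ : X → Measure X}
    (hκ : Measurable κ) (hκp : ∀ y, IsProbabilityMeasure (κ y)) :
    IsProbabilityMeasure (ρ.bind κ) :=
  ⟨by rw [myBind_univ hκ hκp]; exact measure_univ⟩

lemma myBind_smul {ρ : Measure X} {κ : X → Measure X} (hκ : Measurable κ) (c : ℝ≥0∞) :
    (c • ρ).bind κ = c • ρ.bind κ := by
  ext s hs
  rw [Measure.bind_apply hs hκ.aemeasurable, Measure.smul_apply, Measure.bind_apply hs hκ.aemeasurable,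
    lintegral_smul_measure]

/-- integral of a nonneg bounded function equals toReal of lintegral -/
lemma myIntegral_nonneg_eq {m : Measure X} {g : X → ℝ} (hg : Measurable g)
    (h0 : ∀ y, 0 ≤ g y) :
    ∫ y, g y ∂m = (∫⁻ y, ENNReal.ofReal (g y) ∂m).toReal := by
  rw [integral_eq_lintegral_of_nonneg_ae (ae_of_all _ h0) hg.aestronglyMeasurable]

lemma myMeasurable_integral {κ : X → Measure X} (hκ : Measurable κ)
    (hκp : ∀ y, IsProbabilityMeasure (κ y)) {g : X → ℝ} (hg : Measurable g)
    {C : ℝ} (hgb : ∀ y, |g y| ≤ C) :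
    Measurable fun x => ∫ y, g y ∂κ x := by
  have key : (fun x => ∫ y, g y ∂κ x)
      = fun x => (∫⁻ y, ENNReal.ofReal (g y + C) ∂κ x).toReal - C := by
    funext x
    haveI := hκp x
    have h1 : ∫ y, (g y + C) ∂κ x = (∫⁻ y, ENNReal.ofReal (g y + C) ∂κ x).toReal :=
      myIntegral_nonneg_eq (hg.add measurable_const)
        (fun y => by have := hgb y; cases abs_le.1 this; linarith)
    have h2 : ∫ y, (g y + C) ∂κ x = (∫ y, g y ∂κ x) + C := by
      rw [integral_add (myIntegrable_of_bdd hg hgb) (integrable_const C)]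
      simp
    linarith [h1, h2]
  rw [key]
  exact ((Measure.measurable_lintegral ((hg.add measurable_const).ennreal_ofReal)).comp
    hκ).ennreal_toReal.sub measurable_const

lemma myLintegral_le_of_bdd {m : Measure X} [IsProbabilityMeasure m] {g : X → ℝ}
    {D : ℝ} (hgb : ∀ y, g y ≤ D) :
    ∫⁻ y, ENNReal.ofReal (g y) ∂m ≤ ENNReal.ofReal D := by
  calc ∫⁻ y, ENNReal.ofReal (g y) ∂m ≤ ∫⁻ _, ENNReal.ofReal D ∂m :=
        lintegral_mono fun y => ENNReal.ofReal_le_ofReal (hgb y)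
    _ = ENNReal.ofReal D := by simp

lemma myIntegral_bind {ρ : Measure X} [IsFiniteMeasure ρ] {κ : X → Measure X}
    (hκ : Measurable κ) (hκp : ∀ y, IsProbabilityMeasure (κ y)) {g : X → ℝ}
    (hg : Measurable g) {C : ℝ} (hgb : ∀ y, |g y| ≤ C) :
    ∫ y, g y ∂(ρ.bind κ) = ∫ x, (∫ y, g y ∂κ x) ∂ρ := by
  haveI : IsFiniteMeasure (ρ.bind κ) := myIsFiniteMeasure_bind hκ hκp
  set g' : X → ℝ := fun y => g y + C with hg'def
  have hg' : Measurable g' := hg.add measurable_const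
  have hg'0 : ∀ y, 0 ≤ g' y := fun y => by
    have := (abs_le.1 (hgb y)).1; simp only [hg'def]; linarith
  have hg'b : ∀ y, g' y ≤ C + C := fun y => by
    have := abs_le.1 (hgb y)
    show g y + C ≤ C + C
    linarith [this.2]
  -- nonneg case for g'
  have step1 : ∫ y, g' y ∂(ρ.bind κ) = (∫⁻ y, ENNReal.ofReal (g' y) ∂(ρ.bind κ)).toReal :=
    myIntegral_nonneg_eq hg' hg'0
  have step2 : ∫⁻ y, ENNReal.ofReal (g' y) ∂(ρ.bind κ)
      = ∫⁻ x, ∫⁻ y, ENNReal.ofReal (g' y) ∂κ x ∂ρ :=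
    Measure.lintegral_bind hκ.aemeasurable hg'.ennreal_ofReal.aemeasurable
  have hFmeas : Measurable fun x => ∫⁻ y, ENNReal.ofReal (g' y) ∂κ x :=
    (Measure.measurable_lintegral hg'.ennreal_ofReal).comp hκ
  have hFlt : ∀ x, (∫⁻ y, ENNReal.ofReal (g' y) ∂κ x) < ⊤ := fun x => by
    haveI := hκp x
    exact lt_of_le_of_lt (myLintegral_le_of_bdd hg'b) ENNReal.ofReal_lt_top
  have step3 : (∫⁻ x, ∫⁻ y, ENNReal.ofReal (g' y) ∂κ x ∂ρ).toReal
      = ∫ x, (∫⁻ y, ENNReal.ofReal (g' y) ∂κ x).toReal ∂ρ :=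
    (integral_toReal hFmeas.aemeasurable (ae_of_all _ hFlt)).symm
  have step4 : ∀ x, (∫⁻ y, ENNReal.ofReal (g' y) ∂κ x).toReal = ∫ y, g' y ∂κ x := fun x =>
    (myIntegral_nonneg_eq hg' hg'0).symm
  have key : ∫ y, g' y ∂(ρ.bind κ) = ∫ x, (∫ y, g' y ∂κ x) ∂ρ := by
    rw [step1, step2, step3]
    exact integral_congr_ae (ae_of_all _ step4)
  -- unfold g'
  have lhs : ∫ y, g' y ∂(ρ.bind κ) = (∫ y, g y ∂(ρ.bind κ)) + C * ((ρ.bind κ) Set.univ).toReal := by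
    rw [integral_add (myIntegrable_of_bdd hg hgb) (integrable_const C)]
    simp [mul_comm, measureReal_def]
  have inner : ∀ x, ∫ y, g' y ∂κ x = (∫ y, g y ∂κ x) + C := fun x => by
    haveI := hκp x
    rw [integral_add (myIntegrable_of_bdd hg hgb) (integrable_const C)]
    simp
  have hint : Integrable (fun x => ∫ y, g y ∂κ x) ρ := by
    refine myIntegrable_of_bdd (myMeasurable_integral hκ hκp hg hgb) (C := C) fun x => ?_
    haveI := hκp x
    calc |∫ y, g y ∂κ x| ≤ C * ((κ x) Set.univ).toReal := by
          have := norm_integral_le_of_norm_le_const (μ := κ x) (f := g) (C := C)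
              (ae_of_all _ fun y => by rw [Real.norm_eq_abs]; exact hgb y)
          rwa [Real.norm_eq_abs] at this
      _ = C := by simp
  have rhs : ∫ x, (∫ y, g' y ∂κ x) ∂ρ
      = (∫ x, (∫ y, g y ∂κ x) ∂ρ) + C * (ρ Set.univ).toReal := by
    rw [integral_congr_ae (ae_of_all _ inner), integral_add hint (integrable_const C)]
    simp [mul_comm, measureReal_def]
  have hmass : ((ρ.bind κ) Set.univ) = ρ Set.univ := myBind_univ hκ hκp
  rw [lhs, rhs, hmass] at key
  linarith [key]

lemma myAbs_integral_le {m : Measure X} [IsFiniteMeasure m] {g : X → ℝ} {C : ℝ}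
    (hgb : ∀ y, |g y| ≤ C) : |∫ y, g y ∂m| ≤ C * (m Set.univ).toReal := by
  have := norm_integral_le_of_norm_le_const (μ := m) (f := g) (C := C)
    (ae_of_all _ fun y => by rw [Real.norm_eq_abs]; exact hgb y)
  rwa [Real.norm_eq_abs] at this

lemma myAbs_integral_le_prob {m : Measure X} [IsProbabilityMeasure m] {g : X → ℝ} {C : ℝ}
    (hgb : ∀ y, |g y| ≤ C) : |∫ y, g y ∂m| ≤ C := by
  have := myAbs_integral_le (m := m) hgb
  simpa using this

section Master
variable [MetricSpace X] [BorelSpace X]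
variable {T : Type*} [AddCommMonoid T] [PartialOrder T]

theorem master
    (P : T → X → Measure X) (G : T → Prop) (x₀ : X)
    (hcancel : ∀ (a u v : T), a + u = a + v → u = v)
    (hGadd : ∀ a b, G a → G b → G (a + b))
    (hGup : ∀ a b, G a → a ≤ b → G b)
    (hGle : ∀ a b, G a → b ≤ a + b)
    (hsub : ∀ a u t : T, a + u ≤ t → ∃ v, u ≤ v ∧ t = a + v)
    (hprob : ∀ t x, G t → IsProbabilityMeasure (P t x))
    (hmeas : ∀ t, G t → Measurable (P t))
    (hsemi : ∀ s t x, G s → G t → P (s + t) x = (P s x).bind (P t))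
    (hFeller : ∀ t, G t → ∀ g : X → ℝ, Continuous g → (∃ D, ∀ y, |g y| ≤ D) →
      Continuous fun x => ∫ y, g y ∂P t x)
    {f : X → ℝ} (hfc : Continuous f) {C : ℝ} (hC : 0 ≤ C) (hfC : ∀ x, |f x| ≤ C)
    {ε : ℝ} (hε : 0 < ε) (z : X) (r : ℝ) (N : T) {α : ℝ}
    (hN : G N) (hα : 0 < α) (hα1 : α < 1)
    (hi : ∀ x ∈ Metric.ball z r, ∀ t, G t → N ≤ t →
      |(∫ y, f y ∂P t x) - (∫ y, f y ∂P t x₀)| ≤ ε)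
    (hii : ∀ ν : Measure X, IsProbabilityMeasure ν →
      ∃ s, G s ∧ ENNReal.ofReal α < (ν.bind (P s)) (Metric.ball z r))
    (k : ℕ) :
    ∃ U : Set X, IsOpen U ∧ x₀ ∈ U ∧ ∃ t₀ : T, G t₀ ∧
      ∀ x ∈ U, ∀ t, G t → t₀ ≤ t →
        |(∫ y, f y ∂P t x) - (∫ y, f y ∂P t x₀)| ≤ 2*ε + 2*C*(1-α)^k := by
  have hfm : Measurable f := hfc.measurable
  have hα1' : (0:ℝ) ≤ 1 - α := by linarith
  -- bound on Pf
  have Pfb : ∀ t, G t → ∀ x, |∫ y, f y ∂P t x| ≤ C := fun t ht x => by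
    haveI := hprob t x ht
    exact myAbs_integral_le_prob hfC
  have Pfmeas : ∀ t, G t → Measurable (fun x => ∫ y, f y ∂P t x) := fun t ht =>
    myMeasurable_integral (hmeas t ht) (fun x => hprob t x ht) hfm hfC
  -- semigroup at level of integrals of f
  have Pfsemi : ∀ s u, G s → G u → ∀ x,
      (∫ y, f y ∂P (s + u) x) = ∫ y, (∫ v, f v ∂P u y) ∂P s x := by
    intro s u hs hu x
    rw [hsemi s u x hs hu]
    haveI := hprob s x hs
    exact myIntegral_bind (hmeas u hu) (fun y => hprob u y hu) hfm hfC
  set B := Metric.ball z r with hBdef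
  have hBopen : IsOpen B := Metric.isOpen_ball
  have hBmeas : MeasurableSet B := hBopen.measurableSet
  -- main induction
  have main : ∀ i : ℕ, ∃ (U : Set X) (rem : X → Measure X) (ti : T) (S : T → ℝ),
      IsOpen U ∧ x₀ ∈ U ∧ (ti = 0 ∨ G ti) ∧ (∀ x, IsFiniteMeasure (rem x)) ∧
      (∀ x ∈ U, rem x Set.univ = ENNReal.ofReal ((1-α)^i)) ∧
      (∀ g : X → ℝ, Continuous g → (∃ D, ∀ y, |g y| ≤ D) →
        ContinuousOn (fun x => ∫ y, g y ∂rem x) U) ∧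
      (∀ x ∈ U, ∀ t u : T, G u → N ≤ u → t = ti + u →
        |(∫ y, f y ∂P t x) - (S t + ∫ y, (∫ v, f v ∂P u y) ∂rem x)|
          ≤ ε * (1 - (1-α)^i)) := by
    intro i
    induction i with
    | zero =>
      refine ⟨Set.univ, fun x => Measure.dirac x, 0, fun _ => 0, isOpen_univ,
        Set.mem_univ _, Or.inl rfl, fun x => by infer_instance, ?_, ?_, ?_⟩
      · intro x _; simp
      · intro g hgc hgb
        have : (fun x => ∫ y, g y ∂Measure.dirac x) = g := by
          funext x; exact integral_dirac g x
        rw [this]; exact hgc.continuousOn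
      · intro x _ t u hu hNu ht
        rw [zero_add] at ht
        subst ht
        rw [integral_dirac]
        simp
    | succ i IH =>
      obtain ⟨U, rem, ti, S, hU, hx₀U, hti, hfin, hmass, hcont, hest⟩ := IH
      have hmprev : (0:ℝ) < (1-α)^i := pow_pos (by linarith) i
      haveI := hfin x₀
      have hmassx₀ := hmass x₀ hx₀U
      have hne0 : ENNReal.ofReal ((1-α)^i) ≠ 0 := by
        simp only [ne_eq, ENNReal.ofReal_eq_zero, not_le]; exact hmprev
      have hneT : ENNReal.ofReal ((1-α)^i) ≠ ⊤ := ENNReal.ofReal_ne_top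
      have hνprob : IsProbabilityMeasure ((ENNReal.ofReal ((1-α)^i))⁻¹ • rem x₀) := by
        constructor
        rw [Measure.smul_apply, hmassx₀, smul_eq_mul, ENNReal.inv_mul_cancel hne0 hneT]
      obtain ⟨s, hGs, hνB⟩ := hii _ hνprob
      set w : ℝ := α * (1-α)^i with hwdef
      have hw0 : 0 < w := by positivity
      have hwB : ENNReal.ofReal w < ((rem x₀).bind (P s)) B := by
        rw [myBind_smul (hmeas s hGs), Measure.smul_apply, smul_eq_mul] at hνB
        have h2 : ENNReal.ofReal ((1-α)^i) * ENNReal.ofReal α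
            < ENNReal.ofReal ((1-α)^i) *
              ((ENNReal.ofReal ((1-α)^i))⁻¹ * ((rem x₀).bind (P s)) B) :=
          (ENNReal.mul_lt_mul_iff_right hne0 hneT).2 hνB
        rw [← mul_assoc, ENNReal.mul_inv_cancel hne0 hneT, one_mul,
          ← ENNReal.ofReal_mul (le_of_lt hmprev)] at h2
        rw [hwdef, mul_comm α]
        exact h2
      have hfinb : ∀ x, IsFiniteMeasure ((rem x).bind (P s)) := fun x => by
        haveI := hfin x
        exact myIsFiniteMeasure_bind (hmeas s hGs) (fun y => hprob s y hGs)
      haveI := hfinb x₀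
      have hbinduniv : ∀ x, ((rem x).bind (P s)) Set.univ = rem x Set.univ := fun x =>
        myBind_univ (hmeas s hGs) (fun y => hprob s y hGs)
      -- inner regularity
      obtain ⟨K, hKB, hKclosed, hKlt⟩ :=
        hBmeas.exists_isClosed_lt_add (μ := (rem x₀).bind (P s)) (measure_ne_top _ _)
          (ε := ((rem x₀).bind (P s)) B - ENNReal.ofReal w) (tsub_pos_of_lt hwB).ne'
      have hKw : ENNReal.ofReal w < ((rem x₀).bind (P s)) K := by
        by_contra hcon
        push_neg at hcon
        have h3 := hKlt.trans_le (add_le_add_left hcon _)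
        rw [add_tsub_cancel_of_le hwB.le] at h3
        exact lt_irrefl _ h3
      -- Urysohn
      obtain ⟨h₀, hh0, hh1, hhrange⟩ := exists_continuous_zero_one_of_isClosed
        hBopen.isClosed_compl hKclosed (disjoint_compl_left.mono_right hKB)
      set h : X → ℝ := ⇑h₀ with hhdef
      have hhc : Continuous h := h₀.continuous
      have hhm : Measurable h := hhc.measurable
      have hh01 : ∀ y, 0 ≤ h y ∧ h y ≤ 1 := fun y => ⟨(hhrange y).1, (hhrange y).2⟩
      have hhB : ∀ y, y ∉ B → h y = 0 := fun y hy => hh0 hy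
      have hhabs : ∀ y, |h y| ≤ 1 := fun y => abs_le.2 ⟨by linarith [(hh01 y).1], (hh01 y).2⟩
      -- gs and c
      set gs : X → ℝ := fun y => ∫ v, h v ∂P s y with hgsdef
      have hgsc : Continuous gs := hFeller s hGs h hhc ⟨1, hhabs⟩
      have hgsb : ∀ y, |gs y| ≤ 1 := fun y => by
        haveI := hprob s y hGs; exact myAbs_integral_le_prob hhabs
      set c : X → ℝ := fun x => ∫ y, gs y ∂rem x with hcdef
      have hceq : ∀ x, (∫ y, h y ∂((rem x).bind (P s))) = c x := fun x => by
        haveI := hfin x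
        exact myIntegral_bind (hmeas s hGs) (fun y => hprob s y hGs) hhm hhabs
      have hccont : ContinuousOn c U := hcont gs hgsc ⟨1, hgsb⟩
      have hcx₀ : w < c x₀ := by
        rw [← hceq x₀]
        have hKmeas : MeasurableSet K := hKclosed.measurableSet
        have h1 : ((( rem x₀).bind (P s)) K).toReal ≤ ∫ y, h y ∂((rem x₀).bind (P s)) := by
          have hind : ∫ y, Set.indicator K (fun _ => (1:ℝ)) y ∂((rem x₀).bind (P s))
              = (((rem x₀).bind (P s)) K).toReal := by
            rw [integral_indicator_const (1:ℝ) hKmeas]; simp [measureReal_def]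
          rw [← hind]
          refine integral_mono ((integrable_const (1:ℝ)).indicator hKmeas)
            (myIntegrable_of_bdd hhm hhabs) (fun y => ?_)
          by_cases hyK : y ∈ K
          · simp only [Set.indicator_of_mem hyK]
            have h5 := hh1 hyK
            simp only [Pi.one_apply] at h5
            simp [h5]
          · simp only [Set.indicator_of_notMem hyK]; exact (hh01 y).1
        have h2 : w < ((( rem x₀).bind (P s)) K).toReal :=
          (ENNReal.ofReal_lt_iff_lt_toReal hw0.le (measure_ne_top _ _)).1 hKw
        linarith
      -- new open set
      have hU'open : IsOpen (U ∩ c ⁻¹' Set.Ioi w) :=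
        hccont.isOpen_inter_preimage hU isOpen_Ioi
      set U' : Set X := U ∩ c ⁻¹' Set.Ioi w with hU'def
      have hx₀U' : x₀ ∈ U' := ⟨hx₀U, hcx₀⟩
      have hU'sub : U' ⊆ U := Set.inter_subset_left
      have hcw : ∀ x ∈ U', w < c x := fun x hx => hx.2
      -- density and new remainder
      set dens : X → X → ℝ := fun x y => 1 - (w / c x) * h y with hdensdef
      have hdensm : ∀ x, Measurable (dens x) := fun x =>
        measurable_const.sub (measurable_const.mul hhm)
      have hdens01 : ∀ x ∈ U', ∀ y, 0 ≤ dens x y ∧ dens x y ≤ 1 := by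
        intro x hx y
        have hcx : 0 < c x := lt_trans hw0 (hcw x hx)
        have hθ0 : 0 ≤ w / c x := div_nonneg hw0.le hcx.le
        have hθ1 : w / c x < 1 := (div_lt_one hcx).2 (hcw x hx)
        have hy0 := (hh01 y).1
        have hy1 := (hh01 y).2
        constructor
        · show 0 ≤ 1 - (w / c x) * h y
          nlinarith
        · show 1 - (w / c x) * h y ≤ 1
          nlinarith
      set rem' : X → Measure X := fun x => ((rem x).bind (P s)).withDensity
        (fun y => ((Real.toNNReal (dens x y)) : ℝ≥0∞)) with hrem'def
      have hrem'univ : ∀ x, rem' x Set.univ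
          = ∫⁻ y, ENNReal.ofReal (dens x y) ∂((rem x).bind (P s)) := fun x => by
        simp only [hrem'def]
        rw [withDensity_apply _ MeasurableSet.univ, Measure.restrict_univ]
        rfl
      have hfin' : ∀ x, IsFiniteMeasure (rem' x) := fun x => by
        haveI := hfinb x
        constructor
        rw [hrem'univ x]
        calc ∫⁻ y, ENNReal.ofReal (dens x y) ∂((rem x).bind (P s))
            ≤ ∫⁻ _, ENNReal.ofReal (1 + |w / c x|) ∂((rem x).bind (P s)) := by
              refine lintegral_mono fun y => ENNReal.ofReal_le_ofReal ?_
              have e1 : |(w / c x) * h y| ≤ |w / c x| := by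
                rw [abs_mul]
                exact mul_le_of_le_one_right (abs_nonneg _) (hhabs y)
              have := neg_abs_le ((w / c x) * h y)
              show 1 - (w / c x) * h y ≤ 1 + |w / c x|
              linarith
          _ < ⊤ := by
              rw [lintegral_const]
              exact ENNReal.mul_lt_top ENNReal.ofReal_lt_top (measure_lt_top _ _)
      -- integral formula for rem' on U'
      have hrem'int : ∀ x ∈ U', ∀ g : X → ℝ, Measurable g → ∀ D : ℝ, (∀ y, |g y| ≤ D) →
          ∫ y, g y ∂rem' x
            = (∫ y, g y ∂((rem x).bind (P s)))
              - (w / c x) * ∫ y, h y * g y ∂((rem x).bind (P s)) := by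
        intro x hx g hgm D hgb
        haveI := hfinb x
        have hhgb : ∀ y, |h y * g y| ≤ D := fun y => by
          rw [abs_mul]
          exact le_trans (mul_le_of_le_one_left (abs_nonneg _) (hhabs y)) (hgb y)
        simp only [hrem'def]
        rw [integral_withDensity_eq_integral_smul (hdensm x).real_toNNReal]
        have e : ∫ y, (Real.toNNReal (dens x y)) • g y ∂((rem x).bind (P s))
            = ∫ y, (g y - (w / c x) * (h y * g y)) ∂((rem x).bind (P s)) := by
          refine integral_congr_ae (ae_of_all _ fun y => ?_)
          show (Real.toNNReal (dens x y)) • g y = g y - (w / c x) * (h y * g y)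
          rw [NNReal.smul_def, Real.coe_toNNReal _ (hdens01 x hx y).1]
          show dens x y * g y = _
          rw [hdensdef]
          ring
        rw [e, integral_sub (myIntegrable_of_bdd hgm hgb)
          ((myIntegrable_of_bdd (g := fun y => h y * g y) (hhm.mul hgm) hhgb).const_mul _), integral_const_mul]
      -- mass of rem' on U'
      have hmass' : ∀ x ∈ U', rem' x Set.univ = ENNReal.ofReal ((1-α)^(i+1)) := by
        intro x hx
        haveI := hfinb x
        haveI := hfin x
        have hdabs : ∀ y, |dens x y| ≤ 1 := fun y =>
          abs_le.2 ⟨by linarith [(hdens01 x hx y).1], (hdens01 x hx y).2⟩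
        rw [hrem'univ x,
          ← ofReal_integral_eq_lintegral_ofReal (myIntegrable_of_bdd (hdensm x) hdabs)
            (ae_of_all _ fun y => (hdens01 x hx y).1)]
        congr 1
        have hint1 : ∫ y, (1:ℝ) ∂((rem x).bind (P s)) = (1-α)^i := by
          rw [integral_const, measureReal_def, hbinduniv x, hmass x (hU'sub hx), smul_eq_mul, mul_one,
            ENNReal.toReal_ofReal (le_of_lt hmprev)]
        have e : ∫ y, dens x y ∂((rem x).bind (P s))
            = (∫ y, (1:ℝ) ∂((rem x).bind (P s)))
              - (w / c x) * ∫ y, h y ∂((rem x).bind (P s)) := by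
          have e2 : ∀ y, dens x y = 1 - (w / c x) * h y := fun y => rfl
          rw [show (fun y => dens x y) = fun y => 1 - (w / c x) * h y from funext e2,
            integral_sub (integrable_const 1) ((myIntegrable_of_bdd hhm hhabs).const_mul _),
            integral_const_mul]
        rw [e, hint1, hceq x, div_mul_cancel₀ _ (ne_of_gt (hw0.trans (hcw x hx))), hwdef]
        ring
      -- continuity on U'
      have hcont' : ∀ g : X → ℝ, Continuous g → (∃ D, ∀ y, |g y| ≤ D) →
          ContinuousOn (fun x => ∫ y, g y ∂rem' x) U' := by
        intro g hgc hgbe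
        obtain ⟨D, hgb⟩ := hgbe
        have hgm := hgc.measurable
        have hhgb : ∀ y, |h y * g y| ≤ D := fun y => by
          rw [abs_mul]
          exact le_trans (mul_le_of_le_one_left (abs_nonneg _) (hhabs y)) (hgb y)
        have hG1c : Continuous (fun y => ∫ v, g v ∂P s y) := hFeller s hGs g hgc ⟨D, hgb⟩
        have hG2c : Continuous (fun y => ∫ v, h v * g v ∂P s y) :=
          hFeller s hGs _ (hhc.mul hgc) ⟨D, hhgb⟩
        have hG1b : ∀ y, |∫ v, g v ∂P s y| ≤ D := fun y => by
          haveI := hprob s y hGs; exact myAbs_integral_le_prob hgb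
        have hG2b : ∀ y, |∫ v, h v * g v ∂P s y| ≤ D := fun y => by
          haveI := hprob s y hGs; exact myAbs_integral_le_prob hhgb
        have base1 := hcont _ hG1c ⟨D, hG1b⟩
        have base2 := hcont _ hG2c ⟨D, hG2b⟩
        have formula : ∀ x ∈ U', ∫ y, g y ∂rem' x
            = (∫ y, (∫ v, g v ∂P s y) ∂rem x)
              - (w / c x) * (∫ y, (∫ v, h v * g v ∂P s y) ∂rem x) := by
          intro x hx
          haveI := hfin x
          rw [hrem'int x hx g hgm D hgb,
            myIntegral_bind (hmeas s hGs) (fun y => hprob s y hGs) hgm hgb,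
            myIntegral_bind (g := fun y => h y * g y) (hmeas s hGs) (fun y => hprob s y hGs) (hhm.mul hgm) hhgb]
        have crhs : ContinuousOn (fun x => (∫ y, (∫ v, g v ∂P s y) ∂rem x)
            - (w / c x) * (∫ y, (∫ v, h v * g v ∂P s y) ∂rem x)) U' :=
          (base1.mono hU'sub).sub
            (((continuousOn_const.div (hccont.mono hU'sub)
              (fun x hx => ne_of_gt (hw0.trans (hcw x hx)))).mul (base2.mono hU'sub)))
        exact crhs.congr formula
      -- the new times and S'
      have hdecS : ∀ t : T, ∀ u'' : T, G u'' → N ≤ u'' → t = (ti + s) + u'' →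
          (if hdec : ∃ u, G u ∧ N ≤ u ∧ t = (ti + s) + u
            then w * (∫ y, f y ∂P hdec.choose x₀) else 0)
          = w * (∫ y, f y ∂P u'' x₀) := by
        intro t u'' hGu'' hNu'' htu''
        have hdec : ∃ u, G u ∧ N ≤ u ∧ t = (ti + s) + u := ⟨u'', hGu'', hNu'', htu''⟩
        rw [dif_pos hdec]
        obtain ⟨hg1, hg2, hg3⟩ := hdec.choose_spec
        rw [hcancel (ti + s) _ _ (hg3.symm.trans htu'')]
      refine ⟨U', rem', ti + s, fun t =>
        S t + (if hdec : ∃ u, G u ∧ N ≤ u ∧ t = (ti + s) + u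
          then w * (∫ y, f y ∂P hdec.choose x₀) else 0),
        hU'open, hx₀U', ?_, hfin', hmass', hcont', ?_⟩
      · rcases hti with h0 | hG
        · rw [h0, zero_add]; exact Or.inr hGs
        · exact Or.inr (hGadd _ _ hG hGs)
      · intro x hx t u'' hGu'' hNu'' htu''
        have hxU := hU'sub hx
        haveI := hfin x
        haveI := hfinb x
        have hcx : 0 < c x := hw0.trans (hcw x hx)
        have hGsu : G (s + u'') := hGadd _ _ hGs hGu''
        have hNsu : N ≤ s + u'' := le_trans hNu'' (hGle s u'' hGs)
        have htold : t = ti + (s + u'') := by rw [htu'', add_assoc]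
        have h1 := hest x hxU t (s + u'') hGsu hNsu htold
        have e1 : (∫ y, (∫ v, f v ∂P (s + u'') y) ∂rem x)
            = ∫ y, (∫ v, f v ∂P u'' y) ∂((rem x).bind (P s)) := by
          have e1a : ∫ y, (∫ v, f v ∂P (s + u'') y) ∂rem x
              = ∫ y, (∫ y', (∫ v, f v ∂P u'' y') ∂P s y) ∂rem x :=
            integral_congr_ae (ae_of_all _ fun y => Pfsemi s u'' hGs hGu'' y)
          rw [e1a, ← myIntegral_bind (hmeas s hGs) (fun y => hprob s y hGs)
            (Pfmeas u'' hGu'') (Pfb u'' hGu'')]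
        rw [e1] at h1
        have e2 := hrem'int x hx (fun y => ∫ v, f v ∂P u'' y) (Pfmeas u'' hGu'') C
          (Pfb u'' hGu'')
        -- capture estimate
        have ecap : |(w / c x) * (∫ y, h y * (∫ v, f v ∂P u'' y) ∂((rem x).bind (P s)))
            - w * (∫ v, f v ∂P u'' x₀)| ≤ ε * w := by
          have hch : (∫ y, h y ∂((rem x).bind (P s))) = c x := hceq x
          have hPfm := Pfmeas u'' hGu''
          have hPfbd := Pfb u'' hGu''
          have hdiffb : ∀ y, |h y * ((∫ v, f v ∂P u'' y) - (∫ v, f v ∂P u'' x₀))| ≤ 2*C :=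
            fun y => by
              rw [abs_mul]
              refine le_trans (mul_le_of_le_one_left (abs_nonneg _) (hhabs y)) ?_
              calc |(∫ v, f v ∂P u'' y) - (∫ v, f v ∂P u'' x₀)|
                  ≤ |∫ v, f v ∂P u'' y| + |∫ v, f v ∂P u'' x₀| := abs_sub _ _
                _ ≤ 2*C := by linarith [hPfbd y, hPfbd x₀]
          have keyint : ∫ y, h y * ((∫ v, f v ∂P u'' y) - (∫ v, f v ∂P u'' x₀))
                ∂((rem x).bind (P s))
              = (∫ y, h y * (∫ v, f v ∂P u'' y) ∂((rem x).bind (P s)))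
                - (∫ v, f v ∂P u'' x₀) * c x := by
            have ptw : (fun y => h y * ((∫ v, f v ∂P u'' y) - (∫ v, f v ∂P u'' x₀)))
                = fun y => h y * (∫ v, f v ∂P u'' y) - (∫ v, f v ∂P u'' x₀) * h y := by
              funext y; ring
            rw [ptw, integral_sub (myIntegrable_of_bdd (g := fun y => h y * ∫ v, f v ∂P u'' y) (hhm.mul hPfm)
                (fun y => by
                  rw [abs_mul]
                  exact le_trans (mul_le_of_le_one_left (abs_nonneg _) (hhabs y)) (hPfbd y)))
              ((myIntegrable_of_bdd hhm hhabs).const_mul _), integral_const_mul, hch]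
          have hintabs : |∫ y, h y * ((∫ v, f v ∂P u'' y) - (∫ v, f v ∂P u'' x₀))
              ∂((rem x).bind (P s))| ≤ ε * c x := by
            have hintg : Integrable
                (fun y => |h y| * |(∫ v, f v ∂P u'' y) - (∫ v, f v ∂P u'' x₀)|)
                ((rem x).bind (P s)) := by
              have := (myIntegrable_of_bdd (m := (rem x).bind (P s)) (hhm.mul (hPfm.sub measurable_const)) hdiffb).abs
              simpa [abs_mul] using this
            have habs1 : |∫ y, h y * ((∫ v, f v ∂P u'' y) - (∫ v, f v ∂P u'' x₀))
                ∂((rem x).bind (P s))|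
                ≤ ∫ y, |h y| * |(∫ v, f v ∂P u'' y) - (∫ v, f v ∂P u'' x₀)|
                  ∂((rem x).bind (P s)) := by
              have := norm_integral_le_integral_norm (μ := (rem x).bind (P s))
                (f := fun y => h y * ((∫ v, f v ∂P u'' y) - (∫ v, f v ∂P u'' x₀)))
              simpa [Real.norm_eq_abs, abs_mul] using this
            have habs2 : ∫ y, |h y| * |(∫ v, f v ∂P u'' y) - (∫ v, f v ∂P u'' x₀)|
                  ∂((rem x).bind (P s))
                ≤ ∫ y, ε * h y ∂((rem x).bind (P s)) := by
              refine integral_mono hintg ((myIntegrable_of_bdd hhm hhabs).const_mul ε)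
                (fun y => ?_)
              by_cases hyB : y ∈ B
              · rw [abs_of_nonneg (hh01 y).1]
                calc h y * |(∫ v, f v ∂P u'' y) - (∫ v, f v ∂P u'' x₀)|
                    ≤ h y * ε := mul_le_mul_of_nonneg_left (hi y hyB u'' hGu'' hNu'') (hh01 y).1
                  _ = ε * h y := mul_comm _ _
              · rw [hhB y hyB]; simp
            have habs3 : ∫ y, ε * h y ∂((rem x).bind (P s)) = ε * c x := by
              rw [integral_const_mul, hch]
            linarith
          have keyeq : (w / c x) * (∫ y, h y * (∫ v, f v ∂P u'' y) ∂((rem x).bind (P s)))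
              - w * (∫ v, f v ∂P u'' x₀)
              = (w / c x) * (∫ y, h y * ((∫ v, f v ∂P u'' y) - (∫ v, f v ∂P u'' x₀))
                  ∂((rem x).bind (P s))) := by
            rw [keyint, mul_sub]
            have : (w / c x) * ((∫ v, f v ∂P u'' x₀) * c x) = w * (∫ v, f v ∂P u'' x₀) := by
              field_simp
            rw [this]
          rw [keyeq, abs_mul, abs_of_nonneg (div_nonneg hw0.le hcx.le)]
          calc (w / c x) * |∫ y, h y * ((∫ v, f v ∂P u'' y) - (∫ v, f v ∂P u'' x₀))
                ∂((rem x).bind (P s))|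
              ≤ (w / c x) * (ε * c x) :=
                mul_le_mul_of_nonneg_left hintabs (div_nonneg hw0.le hcx.le)
            _ = ε * w := by field_simp
        simp only at e2 ⊢
        rw [hdecS t u'' hGu'' hNu'' htu'']
        have l1 := abs_le.1 h1
        have l2 := abs_le.1 ecap
        have pow_eq : ε * (1 - (1-α)^i) + ε * w = ε * (1 - (1-α)^(i+1)) := by
          rw [hwdef]; ring
        rw [abs_le]
        constructor <;> [linarith [l1.1, l2.1, e2]; linarith [l1.2, l2.2, e2]]
  -- final assembly
  obtain ⟨U, rem, ti, S, hU, hx₀U, hti, hfin, hmass, hcont, hest⟩ := main k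
  refine ⟨U, hU, hx₀U, ti + N, ?_, ?_⟩
  · rcases hti with h0 | hG
    · rw [h0, zero_add]; exact hN
    · exact hGadd _ _ hG hN
  · intro x hxU t hGt htt
    obtain ⟨u, hNu, htu⟩ := hsub ti N t htt
    have hGu : G u := hGup N u hN hNu
    have h1 := hest x hxU t u hGu hNu htu
    have h2 := hest x₀ hx₀U t u hGu hNu htu
    have hIx : |∫ y, (∫ v, f v ∂P u y) ∂rem x| ≤ C * (1-α)^k := by
      haveI := hfin x
      have := myAbs_integral_le (m := rem x) (g := fun y => ∫ v, f v ∂P u y) (C := C)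
        (fun y => Pfb u hGu y)
      rw [hmass x hxU, ENNReal.toReal_ofReal (by positivity)] at this
      exact this
    have hIx₀ : |∫ y, (∫ v, f v ∂P u y) ∂rem x₀| ≤ C * (1-α)^k := by
      haveI := hfin x₀
      have := myAbs_integral_le (m := rem x₀) (g := fun y => ∫ v, f v ∂P u y) (C := C)
        (fun y => Pfb u hGu y)
      rw [hmass x₀ hx₀U, ENNReal.toReal_ofReal (by positivity)] at this
      exact this
    have hδk : (0:ℝ) ≤ (1-α)^k := by positivity
    have hb : ε * (1 - (1-α)^k) ≤ ε := by nlinarith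
    have l1 := abs_le.1 (h1.trans hb)
    have l2 := abs_le.1 (h2.trans hb)
    have l3 := abs_le.1 hIx
    have l4 := abs_le.1 hIx₀
    rw [abs_le]
    constructor <;> [linarith [l1.1, l2.2, l3.1, l4.2]; linarith [l1.2, l2.1, l3.2, l4.1]]

end Master

end EPropHelpers

/-- STATEMENT 9 (Lemma 1, with condition (b')), stated for both `T = ℕ₊` (first
conjunct) and `T = [0,∞)` (second conjunct). -/
theorem stmt9 :
    (∀ (X : Type u) [MetricSpace X] [CompleteSpace X] [TopologicalSpace.SeparableSpace X]
        [MeasurableSpace X] [BorelSpace X]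
        (P : ℕ → X → Measure X) (μ : Measure X) (x₀ : X),
      IsMarkovSemigroupN P → FellerN P →
      IsProbabilityMeasure μ → ErgodicMeasN P μ → (interior (msupp μ)).Nonempty →
      (∀ f : X → ℝ, BddLip f → ∀ ε > 0,
        ∃ (z : X) (r : ℝ) (N : ℕ) (α : ℝ),
          0 < r ∧ Metric.ball z r ⊆ msupp μ ∧ 1 ≤ N ∧ 0 < α ∧
          (∀ x ∈ Metric.ball z r, ∀ n, N ≤ n → |PfN P n f x - PfN P n f x₀| ≤ ε) ∧
          (∀ ν : Measure X, IsProbabilityMeasure ν →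
            ∃ m : ℕ, 1 ≤ m ∧ ENNReal.ofReal α < (ν.bind (P m)) (Metric.ball z r))) →
      EventualEPropN P x₀) ∧
    (∀ (X : Type u) [MetricSpace X] [CompleteSpace X] [TopologicalSpace.SeparableSpace X]
        [MeasurableSpace X] [BorelSpace X]
        (P : ℝ → X → Measure X) (μ : Measure X) (x₀ : X),
      IsMarkovSemigroupR P → FellerR P →
      IsProbabilityMeasure μ → ErgodicMeasR P μ → (interior (msupp μ)).Nonempty →
      (∀ f : X → ℝ, BddLip f → ∀ ε > 0,
        ∃ (z : X) (r : ℝ) (N : ℝ) (α : ℝ),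
          0 < r ∧ Metric.ball z r ⊆ msupp μ ∧ 0 ≤ N ∧ 0 < α ∧
          (∀ x ∈ Metric.ball z r, ∀ t : ℝ, N ≤ t → |PfR P t f x - PfR P t f x₀| ≤ ε) ∧
          (∀ ν : Measure X, IsProbabilityMeasure ν →
            ∃ s : ℝ, 0 ≤ s ∧ ENNReal.ofReal α < (ν.bind (P s)) (Metric.ball z r))) →
      EventualEPropR P x₀) := by
  constructor
  · -- discrete time
    intro X _ _ _ _ _ P μ x₀ hMar hFel hμp hErg hInt hHyp
    obtain ⟨hprob, hmeasA, hsemiA⟩ := hMar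
    have hmeas : ∀ n : ℕ, 1 ≤ n → Measurable (P n) := fun n hn =>
      Measure.measurable_of_measurable_coe _ (fun A hA => hmeasA n A hn hA)
    have hsemi : ∀ m n : ℕ, ∀ x : X, 1 ≤ m → 1 ≤ n →
        P (m + n) x = (P m x).bind (P n) := fun m n x hm hn => by
      ext A hA
      rw [Measure.bind_apply hA (hmeas n hn).aemeasurable]
      exact hsemiA m n x A hm hn hA
    intro f hfBL ε hε
    obtain ⟨⟨K, hK⟩, ⟨C, hC⟩⟩ := hfBL
    have hfc : Continuous f := hK.continuous
    have hC0 : (0:ℝ) ≤ C := le_trans (abs_nonneg _) (hC x₀)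
    have hε' : 0 < ε / 5 := by linarith
    obtain ⟨z, r, N, α, hr, hBsupp, hN, hα, hi, hii⟩ := hHyp f ⟨⟨K, hK⟩, ⟨C, hC⟩⟩ (ε/5) hε'
    have hα1 : α < 1 := by
      haveI := hprob N x₀ hN
      obtain ⟨m, hm, hlt⟩ := hii (P N x₀) (hprob N x₀ hN)
      haveI : IsProbabilityMeasure ((P N x₀).bind (P m)) :=
        myIsProbabilityMeasure_bind (hmeas m hm) (fun y => hprob m y hm)
      have hle : ((P N x₀).bind (P m)) (Metric.ball z r) ≤ 1 := prob_le_one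
      exact ENNReal.ofReal_lt_one.1 (lt_of_lt_of_le hlt hle)
    obtain ⟨k, hk⟩ := exists_pow_lt_of_lt_one
      (show (0:ℝ) < (ε/5) / (C + 1) by positivity) (show (1:ℝ) - α < 1 by linarith)
    obtain ⟨U, hUopen, hx₀U, t₀, ht₀, hbound⟩ := master P (fun n : ℕ => 1 ≤ n) x₀
      (fun a u v h => by omega) (fun a b ha hb => by omega) (fun a b ha hab => by omega)
      (fun a b hb => by omega) (fun a u t h => ⟨t - a, by omega, by omega⟩)
      hprob hmeas hsemi (fun n hn g hg hb => (hFel n hn g hg hb).1)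
      hfc hC0 hC hε' z r N hN hα hα1
      (fun x hx t ht hNt => hi x hx t hNt)
      (fun ν hν => hii ν hν) k
    obtain ⟨δ, hδ, hball⟩ := Metric.isOpen_iff.1 hUopen x₀ hx₀U
    refine ⟨δ, hδ, t₀, ht₀, fun x hx n hn => ?_⟩
    have hGn : 1 ≤ n := le_trans ht₀ hn
    have h := hbound x (hball (Metric.mem_ball.2 hx)) n hGn hn
    have h1 : (0:ℝ) ≤ (1-α)^k := pow_nonneg (by linarith) k
    have h2 : C * (1-α)^k ≤ (C+1) * (1-α)^k := by nlinarith
    have h3 : (C+1) * (1-α)^k < (C+1) * ((ε/5) / (C+1)) :=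
      mul_lt_mul_of_pos_left hk (by positivity)
    have h4 : (C+1) * ((ε/5) / (C+1)) = ε/5 := by field_simp
    calc |PfN P n f x - PfN P n f x₀| ≤ 2*(ε/5) + 2*C*(1-α)^k := h
      _ < ε := by linarith
  · -- continuous time
    intro X _ _ _ _ _ P μ x₀ hMar hFel hμp hErg hInt hHyp
    obtain ⟨hprob, hmeasA, hzero, hsemiA⟩ := hMar
    have hmeas : ∀ t : ℝ, 0 ≤ t → Measurable (P t) := fun t ht =>
      Measure.measurable_of_measurable_coe _ (fun A hA => hmeasA t A ht hA)
    have hsemi : ∀ s t : ℝ, ∀ x : X, 0 ≤ s → 0 ≤ t →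
        P (s + t) x = (P s x).bind (P t) := fun s t x hs ht => by
      ext A hA
      rw [Measure.bind_apply hA (hmeas t ht).aemeasurable]
      exact hsemiA s t x A hs ht hA
    intro f hfBL ε hε
    obtain ⟨⟨K, hK⟩, ⟨C, hC⟩⟩ := hfBL
    have hfc : Continuous f := hK.continuous
    have hC0 : (0:ℝ) ≤ C := le_trans (abs_nonneg _) (hC x₀)
    have hε' : 0 < ε / 5 := by linarith
    obtain ⟨z, r, N, α, hr, hBsupp, hN, hα, hi, hii⟩ := hHyp f ⟨⟨K, hK⟩, ⟨C, hC⟩⟩ (ε/5) hε'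
    have hα1 : α < 1 := by
      haveI := hprob N x₀ hN
      obtain ⟨m, hm, hlt⟩ := hii (P N x₀) (hprob N x₀ hN)
      haveI : IsProbabilityMeasure ((P N x₀).bind (P m)) :=
        myIsProbabilityMeasure_bind (hmeas m hm) (fun y => hprob m y hm)
      have hle : ((P N x₀).bind (P m)) (Metric.ball z r) ≤ 1 := prob_le_one
      exact ENNReal.ofReal_lt_one.1 (lt_of_lt_of_le hlt hle)
    obtain ⟨k, hk⟩ := exists_pow_lt_of_lt_one
      (show (0:ℝ) < (ε/5) / (C + 1) by positivity) (show (1:ℝ) - α < 1 by linarith)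
    obtain ⟨U, hUopen, hx₀U, t₀, ht₀, hbound⟩ := master P (fun t : ℝ => 0 ≤ t) x₀
      (fun a u v h => by linarith) (fun a b ha hb => by linarith)
      (fun a b ha hab => by linarith) (fun a b hb => by linarith)
      (fun a u t h => ⟨t - a, by linarith, by ring⟩)
      hprob hmeas hsemi (fun t ht g hg hb => (hFel t ht g hg hb).1)
      hfc hC0 hC hε' z r N hN hα hα1
      (fun x hx t ht hNt => hi x hx t hNt)
      (fun ν hν => hii ν hν) k
    obtain ⟨δ, hδ, hball⟩ := Metric.isOpen_iff.1 hUopen x₀ hx₀U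
    refine ⟨δ, hδ, t₀, ht₀, fun x hx t ht => ?_⟩
    have hGt : (0:ℝ) ≤ t := le_trans ht₀ ht
    have h := hbound x (hball (Metric.mem_ball.2 hx)) t hGt ht
    have h1 : (0:ℝ) ≤ (1-α)^k := pow_nonneg (by linarith) k
    have h2 : C * (1-α)^k ≤ (C+1) * (1-α)^k := by nlinarith
    have h3 : (C+1) * (1-α)^k < (C+1) * ((ε/5) / (C+1)) :=
      mul_lt_mul_of_pos_left hk (by positivity)
    have h4 : (C+1) * ((ε/5) / (C+1)) = ε/5 := by field_simp
    calc |PfR P t f x - PfR P t f x₀| ≤ 2*(ε/5) + 2*C*(1-α)^k := h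
      _ < ε := by linarith
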